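/- For any valid instance (P,O), the optimal coating runtime satisfies OPT(P,O) ≥ MD(P,O), where MD(P,O) is the matching dilation: the minimum over all legal position sets U ∈ 𝓛 and all perfect matchings M of the complete bipartite graph G(P,U) (with edge (p,u) of cost d(p,u)) of the maximum edge cost in M. -/
import Mathlib


/-- Nodes of the infinite regular triangular grid, realized on `ℤ × ℤ`. -/
abbrev Node : Type := ℤ × ℤ

/-- The infinite regular triangular grid graph `G_eqt`. -/
def Geqt : SimpleGraph Node :=
  SimpleGraph.fromRel (fun u v =>
    (v.1 - u.1, v.2 - u.2) ∈ ({(1, 0), (0, 1), (1, -1)} : Set (ℤ × ℤ)))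

/-- Graph distance in the triangular grid. -/
noncomputable def gdist (u v : Node) : ℕ := Geqt.dist u v

/-- Distance from a node to a set of nodes. -/
noncomputable def gdistSet (v : Node) (U : Set Node) : ℕ := sInf (gdist v '' U)

/-- A coating instance: the initial (contracted) particle positions and an object. -/
structure Instance where
  particles : Set Node
  object : Set Node

/-- Layer `i`: the set of nodes at distance `i` from the object. -/
def layer (O : Set Node) (i : ℕ) : Set Node := {v | gdistSet v O = i}

/-- `B O i` is the number of nodes in layer `i`. -/
noncomputable def B (O : Set Node) (i : ℕ) : ℕ := (layer O i).ncard

/-- The subgraph of `G_eqt` induced by `S` is connected. -/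
def connectedSet (S : Set Node) : Prop := (Geqt.induce S).Connected

/-- `S` is `k`-connected: removing fewer than `k` nodes leaves it connected. -/
def kConnectedSet (k : ℕ) (S : Set Node) : Prop :=
  ∀ D : Set Node, D ⊆ S → D.Finite → D.ncard < k → connectedSet (S \ D)

/-- A valid instance for the universal coating problem: finitely many particles,
all initially contracted (and idle), a single connected object, the particle
system connected to the object, no holes in the object, and no narrow tunnels. -/
def ValidInstance (I : Instance) : Prop :=
  I.particles.Finite ∧ I.particles.Nonempty ∧
  I.particles ∩ I.object = ∅ ∧
  connectedSet I.object ∧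
  connectedSet (I.particles ∪ I.object) ∧
  connectedSet I.objectᶜ ∧
  kConnectedSet (2 * (⌈(I.particles.ncard : ℚ) / (B I.object 1 : ℚ)⌉₊ + 1)) I.objectᶜ

/-- A set of occupied nodes is a legal coating configuration: every unoccupied
non-object node is at least as far from the object as every occupied node. -/
def legal (I : Instance) (S : Set Node) : Prop :=
  ∀ v, v ∉ I.object → v ∉ S → ∀ w ∈ S, gdistSet w I.object ≤ gdistSet v I.object

/-- The particles of an instance, as a type. -/
abbrev Pt (I : Instance) : Type := {v : Node // v ∈ I.particles}

/-- The nodes occupied by a particle given as a (tail, head) pair. -/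
def nodesOf (q : Node × Node) : Set Node := {q.1, q.2}

/-- A particle is contracted if its tail and head coincide. -/
def Contracted (q : Node × Node) : Prop := q.1 = q.2

/-- In one round a particle performs at most one movement:
it stays put, performs a single expansion, or a single contraction. -/
def MoveStep (a b : Node × Node) : Prop :=
  b = a
  ∨ (Contracted a ∧ b.1 = a.1 ∧ Geqt.Adj a.2 b.2)
  ∨ (¬ Contracted a ∧ b = (a.2, a.2))

/-- The set of nodes occupied by the particle system at round `t`. -/
def occupiedAt (I : Instance) (e : ℕ → Pt I → Node × Node) (t : ℕ) : Set Node :=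
  ⋃ p : Pt I, nodesOf (e t p)

/-- An execution: all particles start contracted at their initial positions,
occupy one node or two adjacent nodes, perform at most one movement per round,
never collide with each other, and never enter the object. -/
def IsExec (I : Instance) (e : ℕ → Pt I → Node × Node) : Prop :=
  (∀ p, e 0 p = (p.1, p.1)) ∧
  (∀ t p, Contracted (e t p) ∨ Geqt.Adj (e t p).1 (e t p).2) ∧
  (∀ t p, MoveStep (e t p) (e (t + 1) p)) ∧
  (∀ t p q, p ≠ q → nodesOf (e t p) ∩ nodesOf (e t q) = ∅) ∧
  (∀ t, occupiedAt I e t ∩ I.object = ∅)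

/-- An execution keeps the particle system (together with the object) connected. -/
def ConnectedExec (I : Instance) (e : ℕ → Pt I → Node × Node) : Prop :=
  ∀ t, connectedSet (occupiedAt I e t ∪ I.object)

/-- The execution solves the coating problem by round `T`: all particles are
contracted, the configuration is legal, and it is stable from then on. -/
def SolvesIn (I : Instance) (e : ℕ → Pt I → Node × Node) (T : ℕ) : Prop :=
  (∀ p, Contracted (e T p)) ∧ legal I (occupiedAt I e T) ∧ ∀ t, T ≤ t → e t = e T

/-- `OPT I`: the minimum number of rounds in which any (connectivity-preserving)
sequence of particle movements solves the coating instance `I`. -/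
noncomputable def OPT (I : Instance) : ℕ∞ :=
  sInf {T : ℕ∞ | ∃ T' : ℕ, T = (T' : ℕ∞) ∧
    ∃ e, IsExec I e ∧ ConnectedExec I e ∧ SolvesIn I e T'}

/-- The set `𝓛` of legal particle position sets for the instance `I`:
sets `U` of `n` nodes, disjoint from the object, whose occupation by the
(contracted) particles constitutes a legal coating of the object. -/
def LegalPositions (I : Instance) (U : Set Node) : Prop :=
  U.Finite ∧ U.ncard = I.particles.ncard ∧ U ∩ I.object = ∅ ∧ legal I U

/-- The matching dilation `MD(P,O)`: the minimum, over all legal position sets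
`U ∈ 𝓛` and all perfect matchings of the complete bipartite graph on `P` and
`U` (an edge `(p, u)` having cost `d(p, u)`), of the maximum edge cost of the
matching. -/
noncomputable def MD (I : Instance) : ℕ∞ :=
  sInf {d : ℕ∞ | ∃ U : Set Node, LegalPositions I U ∧
    ∃ σ : {v : Node // v ∈ I.particles} ≃ {u : Node // u ∈ U},
      d = ⨆ p : {v : Node // v ∈ I.particles}, (gdist p.1 (σ p).1 : ℕ∞)}

/-- For any valid instance `(P,O)`, the optimal coating
runtime satisfies `OPT(P,O) ≥ MD(P,O)`: since each particle moves along at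
most one grid edge per round and has to move to some position of a legal
coating, the minimum number of rounds needed to solve the coating instance is
at least the matching dilation. -/
theorem stmt18 (I : Instance) (hI : ValidInstance I) : MD I ≤ OPT I := by
  apply le_sInf
  rintro T ⟨T', rfl, e, hexec, hconn, hsolve⟩
  obtain ⟨h0, hshape, hmove, hdisj, hobj⟩ := hexec
  obtain ⟨hcontr, hlegal, -⟩ := hsolve
  set f : Pt I → Node := fun p => (e T' p).1 with hf
  have hinj : Function.Injective f := by
    intro p q hpq
    by_contra hne
    have hd := hdisj T' p q hne
    have h1 : f p ∈ nodesOf (e T' p) := Or.inl rfl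
    have h2 : f p ∈ nodesOf (e T' q) := by
      rw [hpq]; exact Or.inl rfl
    exact absurd (Set.mem_inter h1 h2) (by simp [hd])
  have hU : occupiedAt I e T' = Set.range f := by
    ext v
    simp only [occupiedAt, Set.mem_iUnion, Set.mem_range]
    constructor
    · rintro ⟨p, hp⟩
      refine ⟨p, ?_⟩
      rcases hp with h | h
      · exact h.symm
      · rw [hf]; simp only []; rw [hcontr p]; exact h.symm
    · rintro ⟨p, rfl⟩; exact ⟨p, Or.inl rfl⟩
  have key : ∀ t (p : Pt I), ∃ w : Geqt.Walk p.1 (e t p).1, w.length ≤ t := by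
    intro t p
    induction t with
    | zero =>
      rw [h0 p]
      exact ⟨SimpleGraph.Walk.nil, le_refl 0⟩
    | succ t ih =>
      obtain ⟨w, hw⟩ := ih
      rcases hmove t p with h | ⟨-, h1, -⟩ | ⟨hnc, h⟩
      · rw [h]; exact ⟨w, hw.trans (Nat.le_succ t)⟩
      · rw [h1]; exact ⟨w, hw.trans (Nat.le_succ t)⟩
      · have hadj : Geqt.Adj (e t p).1 (e t p).2 := (hshape t p).resolve_left hnc
        rw [h]
        exact ⟨w.concat hadj, by
          rw [SimpleGraph.Walk.length_concat]
          exact Nat.succ_le_succ hw⟩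
  have hdist : ∀ p : Pt I, gdist p.1 (f p) ≤ T' := by
    intro p
    obtain ⟨w, hw⟩ := key T' p
    exact (SimpleGraph.dist_le w).trans hw
  haveI : Finite (Pt I) := hI.1.to_subtype
  have hLP : LegalPositions I (Set.range f) := by
    refine ⟨Set.finite_range f, ?_, ?_, ?_⟩
    · rw [← Nat.card_coe_set_eq, Nat.card_range_of_injective hinj,
        ← Nat.card_coe_set_eq]
    · rw [← hU]; exact hobj T'
    · rw [← hU]; exact hlegal
  have hmem : (⨆ p : Pt I, (gdist p.1 (((Equiv.ofInjective f hinj) p).1) : ℕ∞)) ∈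
      {d : ℕ∞ | ∃ U : Set Node, LegalPositions I U ∧
        ∃ σ : {v : Node // v ∈ I.particles} ≃ {u : Node // u ∈ U},
          d = ⨆ p : {v : Node // v ∈ I.particles}, (gdist p.1 (σ p).1 : ℕ∞)} :=
    ⟨Set.range f, hLP, Equiv.ofInjective f hinj, rfl⟩
  refine le_trans (sInf_le hmem) (iSup_le fun p => ?_)
  have hσ : ((Equiv.ofInjective f hinj) p).1 = f p := rfl
  rw [hσ]
  exact Nat.cast_le.mpr (hdist p)
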